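/- Let ε > 0 and let k̄ = l̄ be a nonnegative integer with k̄ ≥ max{ m·⌈2W_m − 1⌉ − 1 , m·⌈W_m·e − ln ε − rτ + ln(4m(m+1)KG)⌉ − 1 }. Then the European put values on the full and on the truncated tree satisfy V − V^{TT} < ε. -/

import Mathlib

open Finset

open scoped Classical

noncomputable section

namespace HScut

/-- Level of a jump path `s : Fin n → ℤ` at time `t` (sum of the first `t` jumps). -/
def levelAt (n : ℕ) (s : Fin n → ℤ) (t : ℕ) : ℤ :=
  ∑ i ∈ Finset.univ.filter (fun i : Fin n => (i : ℕ) < t), s i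

/-- Jump paths of length `n` with jumps of amplitude at most `m`. -/
def paths (n m : ℕ) : Finset (Fin n → ℤ) :=
  Fintype.piFinset fun _ => Finset.Icc (-(m : ℤ)) (m : ℤ)

/-- Weight `π(s) = ∏ q (s i)` of a jump path. -/
def pathWeight (n : ℕ) (q : ℤ → ℝ) (s : Fin n → ℤ) : ℝ :=
  ∏ i, q (s i)

/-- Modified weight `π̃(s)`, where each `q (±i)` (`i ≠ 0`) is replaced by `max (q i) (q (-i))`
(which equals `w_i / n`). -/
def modWeight (n : ℕ) (q : ℤ → ℝ) (s : Fin n → ℤ) : ℝ :=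
  ∏ i, (if s i = 0 then q 0 else max (q (s i)) (q (-s i)))

/-- `q^{(n)}(k)`: probability of a net balance of `k` cumulative jumps at maturity. -/
def qfull (n m : ℕ) (q : ℤ → ℝ) (k : ℤ) : ℝ :=
  ∑ s ∈ (paths n m).filter (fun s => levelAt n s n = k), pathWeight n q s

/-- `q̃^{(n)}(k)`: enlarged probability of a net balance of `k` cumulative jumps at maturity. -/
def qtilde (n m : ℕ) (q : ℤ → ℝ) (k : ℤ) : ℝ :=
  ∑ s ∈ (paths n m).filter (fun s => levelAt n s n = k), modWeight n q s

/-- `q^{k̄,(n)}(k)`: probability of a net balance of `k` jumps at maturity while reaching at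
some time a net balance higher than `k̄`. -/
def qup (n m : ℕ) (q : ℤ → ℝ) (kbar : ℕ) (k : ℤ) : ℝ :=
  ∑ s ∈ (paths n m).filter
      (fun s => levelAt n s n = k ∧ ∃ t ≤ n, (kbar : ℤ) + 1 ≤ levelAt n s t),
    pathWeight n q s

/-- `q_{l̄}^{(n)}(k)`: probability of a net balance of `k` jumps at maturity while reaching at
some time a net balance lower than `-l̄`. -/
def qdown (n m : ℕ) (q : ℤ → ℝ) (lbar : ℕ) (k : ℤ) : ℝ :=
  ∑ s ∈ (paths n m).filter
      (fun s => levelAt n s n = k ∧ ∃ t ≤ n, levelAt n s t ≤ -(lbar : ℤ) - 1),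
    pathWeight n q s

/-- `q^{cut,(n)}(k)`: probability of reaching level `k` at maturity without ever leaving the
band `[-l̄, k̄]`. -/
def qcut (n m : ℕ) (q : ℤ → ℝ) (kbar lbar : ℕ) (k : ℤ) : ℝ :=
  ∑ s ∈ (paths n m).filter
      (fun s => levelAt n s n = k ∧
        ∀ t ≤ n, -(lbar : ℤ) ≤ levelAt n s t ∧ levelAt n s t ≤ (kbar : ℤ)),
    pathWeight n q s

/-- `P(j) = C(n,j) p^j (1-p)^(n-j)`. -/
def binomP (n : ℕ) (p : ℝ) (j : ℕ) : ℝ :=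
  (n.choose j : ℝ) * p ^ j * (1 - p) ^ (n - j)

/-- Put payoff at the terminal node `(n, j, k)`. -/
def putPayoff (n : ℕ) (S0 K σ dt h : ℝ) (j : ℕ) (k : ℤ) : ℝ :=
  max (K - S0 * Real.exp ((2 * (j : ℝ) - (n : ℝ)) * (σ * Real.sqrt dt) + h * (k : ℝ))) 0

/-- European put value `V` on the full tree. -/
def Vput (n m : ℕ) (q : ℤ → ℝ) (p S0 K σ τ h r : ℝ) : ℝ :=
  Real.exp (-(r * τ)) *
    ∑ k ∈ Finset.Icc (-((m : ℤ) * n)) ((m : ℤ) * n), ∑ j ∈ Finset.range (n + 1),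
      putPayoff n S0 K σ (τ / n) h j k * binomP n p j * qfull n m q k

/-- European put value `V^{TT}` on the truncated tree. -/
def VTT (n m : ℕ) (q : ℤ → ℝ) (p S0 K σ τ h r : ℝ) (kbar lbar : ℕ) : ℝ :=
  Real.exp (-(r * τ)) *
    ∑ k ∈ Finset.Icc (-(lbar : ℤ)) (kbar : ℤ), ∑ j ∈ Finset.range (n + 1),
      putPayoff n S0 K σ (τ / n) h j k * binomP n p j * qcut n m q kbar lbar k

/-- The sequence `W_i`: `W₁ = w₁`, `W_{i+1} = w_{i+1} + W_i^{(i+1)/i}` (real powers). -/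
def Wseq (w : ℕ → ℝ) : ℕ → ℝ
  | 0 => 0
  | 1 => w 1
  | (i + 2) => w (i + 2) + Wseq w (i + 1) ^ (((i : ℝ) + 2) / ((i : ℝ) + 1))

/-- `M_i = max { W_i, W_i^{(1-i)/i} }` (real powers). -/
def Mseq (w : ℕ → ℝ) (i : ℕ) : ℝ :=
  max (Wseq w i) (Wseq w i ^ ((1 - (i : ℝ)) / (i : ℝ)))

/-- `G = 2 m max{W_m, 1} e^{W_m} ∏_{i=1}^{m-1} M_i²`. -/
def Gconst (w : ℕ → ℝ) (m : ℕ) : ℝ :=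
  2 * m * max (Wseq w m) 1 * Real.exp (Wseq w m) * ∏ i ∈ Finset.Icc 1 (m - 1), (Mseq w i) ^ 2

/-- Value of the underlying at a node with (real) time index `i`, `j` up Brownian moves and
net jump level `l`. -/
def Sval (S0 σ dt h : ℝ) (i : ℝ) (j : ℕ) (l : ℤ) : ℝ :=
  S0 * Real.exp ((2 * (j : ℝ) - i) * (σ * Real.sqrt dt) + (l : ℝ) * h)

/-- Full backward European put price; `VEfull … d j l` is the value `V_E(n-d, j, l)`
(`d` = number of remaining steps). -/
def VEfull (n m : ℕ) (q : ℤ → ℝ) (p dt S0 K σ h r : ℝ) : ℕ → ℕ → ℤ → ℝ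
  | 0, j, l => max (K - Sval S0 σ dt h (n : ℝ) j l) 0
  | (d + 1), j, l =>
      Real.exp (-(r * dt)) *
        ∑ k ∈ Finset.Icc (-(m : ℤ)) (m : ℤ),
          (VEfull n m q p dt S0 K σ h r d (j + 1) (l + k) * p +
            VEfull n m q p dt S0 K σ h r d j (l + k) * (1 - p)) * q k

/-- Full backward American put price; `VAfull … d j l` is the value `V_A(n-d, j, l)`. -/
def VAfull (n m : ℕ) (q : ℤ → ℝ) (p dt S0 K σ h r : ℝ) : ℕ → ℕ → ℤ → ℝ
  | 0, j, l => max (K - Sval S0 σ dt h (n : ℝ) j l) 0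
  | (d + 1), j, l =>
      max
        (Real.exp (-(r * dt)) *
          ∑ k ∈ Finset.Icc (-(m : ℤ)) (m : ℤ),
            (VAfull n m q p dt S0 K σ h r d (j + 1) (l + k) * p +
              VAfull n m q p dt S0 K σ h r d j (l + k) * (1 - p)) * q k)
        (K - Sval S0 σ dt h ((n : ℝ) - (d + 1)) j l)

/-- Truncated backward European put price with boundary value `b`;
`VEtr … d j l` is the value `V_E^b(n-d, j, l)`. -/
def VEtr (n m : ℕ) (q : ℤ → ℝ) (p dt S0 K σ h r b : ℝ) (kbar lbar : ℕ) :
    ℕ → ℕ → ℤ → ℝ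
  | 0, j, l =>
      if -(lbar : ℤ) ≤ l ∧ l ≤ (kbar : ℤ) then max (K - Sval S0 σ dt h (n : ℝ) j l) 0 else b
  | (d + 1), j, l =>
      if -(lbar : ℤ) ≤ l ∧ l ≤ (kbar : ℤ) then
        Real.exp (-(r * dt)) *
          ∑ k ∈ Finset.Icc (-(m : ℤ)) (m : ℤ),
            (VEtr n m q p dt S0 K σ h r b kbar lbar d (j + 1) (l + k) * p +
              VEtr n m q p dt S0 K σ h r b kbar lbar d j (l + k) * (1 - p)) * q k
      else b

/-- Truncated backward American put price with boundary value `b`;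
`VAtr … d j l` is the value `V_A^b(n-d, j, l)`. -/
def VAtr (n m : ℕ) (q : ℤ → ℝ) (p dt S0 K σ h r b : ℝ) (kbar lbar : ℕ) :
    ℕ → ℕ → ℤ → ℝ
  | 0, j, l =>
      if -(lbar : ℤ) ≤ l ∧ l ≤ (kbar : ℤ) then max (K - Sval S0 σ dt h (n : ℝ) j l) 0 else b
  | (d + 1), j, l =>
      if -(lbar : ℤ) ≤ l ∧ l ≤ (kbar : ℤ) then
        max
          (Real.exp (-(r * dt)) *
            ∑ k ∈ Finset.Icc (-(m : ℤ)) (m : ℤ),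
              (VAtr n m q p dt S0 K σ h r b kbar lbar d (j + 1) (l + k) * p +
                VAtr n m q p dt S0 K σ h r b kbar lbar d j (l + k) * (1 - p)) * q k)
          (K - Sval S0 σ dt h ((n : ℝ) - (d + 1)) j l)
      else b

/-- The sum, over all jump-path prefixes that first exit the band `[-l̄, k̄]` at some time
`1 ≤ i ≤ n`, of the prefix probability times `b e^{-r i Δt}`. -/
def exitSum (n m : ℕ) (q : ℤ → ℝ) (r dt : ℝ) (kbar lbar : ℕ) (b : ℝ) : ℝ :=
  ∑ i ∈ Finset.Icc 1 n,
    ∑ y ∈ (paths i m).filter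
        (fun y =>
          (∀ t < i, -(lbar : ℤ) ≤ levelAt i y t ∧ levelAt i y t ≤ (kbar : ℤ)) ∧
          ¬(-(lbar : ℤ) ≤ levelAt i y i ∧ levelAt i y i ≤ (kbar : ℤ))),
      pathWeight i q y * (b * Real.exp (-(r * (i : ℝ) * dt)))

end HScut

open HScut

section Aux

open Real

lemma levelAt_eq_ite (n : ℕ) (s : Fin n → ℤ) (t : ℕ) :
    levelAt n s t = ∑ i : Fin n, if (i : ℕ) < t then s i else 0 := by
  rw [levelAt, Finset.sum_filter]

lemma levelAt_zero (n : ℕ) (s : Fin n → ℤ) : levelAt n s 0 = 0 := by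
  simp [levelAt_eq_ite]

lemma levelAt_cons (N : ℕ) (m : ℕ) (l : ℤ) (s : Fin N → ℤ) (t : ℕ) :
    levelAt (N + 1) (Fin.cons l s) (t + 1) = l + levelAt N s t := by
  rw [levelAt_eq_ite, levelAt_eq_ite, Fin.sum_univ_succ]
  simp [Nat.succ_lt_succ_iff]

lemma mem_paths {n m : ℕ} {s : Fin n → ℤ} :
    s ∈ paths n m ↔ ∀ i, -(m : ℤ) ≤ s i ∧ s i ≤ (m : ℤ) := by
  simp [paths, Fintype.mem_piFinset]

lemma pathWeight_cons (N : ℕ) (q : ℤ → ℝ) (l : ℤ) (s : Fin N → ℤ) :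
    pathWeight (N + 1) q (Fin.cons l s) = q l * pathWeight N q s := by
  rw [pathWeight, Fin.prod_univ_succ]
  simp [pathWeight]

lemma sum_paths_succ (N m : ℕ) (f : (Fin (N + 1) → ℤ) → ℝ) :
    ∑ s ∈ paths (N + 1) m, f s =
      ∑ l ∈ Finset.Icc (-(m : ℤ)) (m : ℤ), ∑ s ∈ paths N m, f (Fin.cons l s) := by
  rw [← Finset.sum_product']
  apply Finset.sum_nbij' (fun s => ((s 0, Fin.tail s) : ℤ × (Fin N → ℤ)))
    (fun p => Fin.cons p.1 p.2)
  · intro a ha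
    simp only [Finset.mem_product]
    rw [mem_paths] at ha
    constructor
    · simpa using (ha 0)
    · rw [mem_paths]; intro i; exact ha i.succ
  · intro p hp
    simp only [Finset.mem_product] at hp
    rw [mem_paths]
    intro i
    refine Fin.cases ?_ ?_ i
    · simpa using hp.1
    · intro j; exact (mem_paths.1 hp.2) j
  · intro a ha; exact Fin.cons_self_tail a
  · intro p hp; simp
  · intro a ha; rw [Fin.cons_self_tail]

lemma sum_pathWeight (N m : ℕ) (q : ℤ → ℝ)
    (hqs : ∑ l ∈ Finset.Icc (-(m : ℤ)) (m : ℤ), q l = 1) :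
    ∑ s ∈ paths N m, pathWeight N q s = 1 := by
  induction N with
  | zero => simp [paths, pathWeight]
  | succ N ih =>
      rw [sum_paths_succ]
      simp only [pathWeight_cons]
      rw [← hqs]
      apply Finset.sum_congr rfl
      intro l _
      rw [← Finset.mul_sum, ih, mul_one]

lemma pathWeight_nonneg {n m : ℕ} {q : ℤ → ℝ}
    (hq : ∀ l ∈ Finset.Icc (-(m : ℤ)) (m : ℤ), 0 ≤ q l) {s : Fin n → ℤ}
    (hs : s ∈ paths n m) : 0 ≤ pathWeight n q s := by
  apply Finset.prod_nonneg
  intro i _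
  exact hq _ (Finset.mem_Icc.2 (mem_paths.1 hs i))

lemma chernoff (m : ℕ) (q : ℤ → ℝ)
    (hq : ∀ l ∈ Finset.Icc (-(m : ℤ)) (m : ℤ), 0 ≤ q l)
    (hqs : ∑ l ∈ Finset.Icc (-(m : ℤ)) (m : ℤ), q l = 1)
    (C : ℝ) (hC : 1 ≤ C)
    (hc : ∑ l ∈ Finset.Icc (-(m : ℤ)) (m : ℤ), q l * Real.exp ((l : ℝ) / m) ≤ C) :
    ∀ (N : ℕ) (B : ℤ),
      ∑ s ∈ (paths N m).filter (fun s => ∃ t ≤ N, B ≤ levelAt N s t), pathWeight N q s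
        ≤ Real.exp (-(B : ℝ) / m) * C ^ N := by
  have hCpos : (0 : ℝ) < C := lt_of_lt_of_le one_pos hC
  have trivialBound : ∀ (N : ℕ) (B : ℤ), B ≤ 0 →
      ∑ s ∈ (paths N m).filter (fun s => ∃ t ≤ N, B ≤ levelAt N s t), pathWeight N q s
        ≤ Real.exp (-(B : ℝ) / m) * C ^ N := by
    intro N B hB
    have h1 : ∑ s ∈ (paths N m).filter (fun s => ∃ t ≤ N, B ≤ levelAt N s t),
        pathWeight N q s ≤ ∑ s ∈ paths N m, pathWeight N q s := by
      apply Finset.sum_le_sum_of_subset_of_nonneg (Finset.filter_subset _ _)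
      intro s hs _
      exact pathWeight_nonneg hq hs
    rw [sum_pathWeight N m q hqs] at h1
    have h2 : (1 : ℝ) ≤ Real.exp (-(B : ℝ) / m) * C ^ N := by
      have e1 : (1 : ℝ) ≤ Real.exp (-(B : ℝ) / m) := by
        rw [Real.one_le_exp_iff]
        apply div_nonneg _ (by positivity)
        simp only [neg_nonneg]
        exact_mod_cast hB
      have e2 : (1 : ℝ) ≤ C ^ N := one_le_pow₀ hC
      nlinarith
    linarith
  intro N
  induction N with
  | zero =>
      intro B
      rcases le_or_gt B 0 with hB | hB
      · exact trivialBound 0 B hB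
      · rw [Finset.sum_filter]
        refine le_trans (le_of_eq (Finset.sum_eq_zero ?_)) (by positivity)
        intro s _
        rw [if_neg]
        rintro ⟨t, ht, hBt⟩
        interval_cases t
        rw [levelAt_zero] at hBt
        omega
  | succ N ih =>
      intro B
      rcases le_or_gt B 0 with hB | hB
      · exact trivialBound (N + 1) B hB
      · have key : ∑ s ∈ (paths (N + 1) m).filter
              (fun s => ∃ t ≤ N + 1, B ≤ levelAt (N + 1) s t), pathWeight (N + 1) q s
            = ∑ l ∈ Finset.Icc (-(m : ℤ)) (m : ℤ),
                q l * ∑ s ∈ (paths N m).filter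
                  (fun s => ∃ t ≤ N, B - l ≤ levelAt N s t), pathWeight N q s := by
          rw [Finset.sum_filter, sum_paths_succ]
          refine Finset.sum_congr rfl fun l _ => ?_
          rw [Finset.sum_filter, Finset.mul_sum]
          refine Finset.sum_congr rfl fun s _ => ?_
          have hiff : (∃ t ≤ N + 1, B ≤ levelAt (N + 1) (Fin.cons l s) t)
              ↔ (∃ t ≤ N, B - l ≤ levelAt N s t) := by
            constructor
            · rintro ⟨t, ht, hBt⟩
              cases t with
              | zero => rw [levelAt_zero] at hBt; omega
              | succ t' =>
                  rw [levelAt_cons N m] at hBt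
                  exact ⟨t', by omega, by omega⟩
            · rintro ⟨t, ht, hBt⟩
              exact ⟨t + 1, by omega, by rw [levelAt_cons N m]; omega⟩
          rw [pathWeight_cons]
          by_cases hP : ∃ t ≤ N, B - l ≤ levelAt N s t
          · rw [if_pos (hiff.2 hP), if_pos hP]
          · rw [if_neg (fun hc2 => hP (hiff.1 hc2)), if_neg hP, mul_zero]
        rw [key]
        have step : ∀ l ∈ Finset.Icc (-(m : ℤ)) (m : ℤ),
            q l * ∑ s ∈ (paths N m).filter
                (fun s => ∃ t ≤ N, B - l ≤ levelAt N s t), pathWeight N q s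
              ≤ q l * Real.exp ((l : ℝ) / m) * (Real.exp (-(B : ℝ) / m) * C ^ N) := by
          intro l hl
          have h1 := ih (B - l)
          have hql : 0 ≤ q l := hq l hl
          have e1 : Real.exp (-((B - l : ℤ) : ℝ) / m)
              = Real.exp ((l : ℝ) / m) * Real.exp (-(B : ℝ) / m) := by
            rw [← Real.exp_add]
            congr 1
            push_cast
            ring
          calc q l * ∑ s ∈ (paths N m).filter
                (fun s => ∃ t ≤ N, B - l ≤ levelAt N s t), pathWeight N q s
              ≤ q l * (Real.exp (-((B - l : ℤ) : ℝ) / m) * C ^ N) :=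
                mul_le_mul_of_nonneg_left h1 hql
            _ = q l * Real.exp ((l : ℝ) / m) * (Real.exp (-(B : ℝ) / m) * C ^ N) := by
                rw [e1]; ring
        calc ∑ l ∈ Finset.Icc (-(m : ℤ)) (m : ℤ),
            q l * ∑ s ∈ (paths N m).filter
              (fun s => ∃ t ≤ N, B - l ≤ levelAt N s t), pathWeight N q s
            ≤ ∑ l ∈ Finset.Icc (-(m : ℤ)) (m : ℤ),
                q l * Real.exp ((l : ℝ) / m) * (Real.exp (-(B : ℝ) / m) * C ^ N) :=
              Finset.sum_le_sum step
          _ = (∑ l ∈ Finset.Icc (-(m : ℤ)) (m : ℤ), q l * Real.exp ((l : ℝ) / m))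
                * (Real.exp (-(B : ℝ) / m) * C ^ N) := by rw [Finset.sum_mul]
          _ ≤ C * (Real.exp (-(B : ℝ) / m) * C ^ N) := by
              apply mul_le_mul_of_nonneg_right hc
              positivity
          _ = Real.exp (-(B : ℝ) / m) * C ^ (N + 1) := by ring

lemma tilt_bound (n m : ℕ) (hn : 1 ≤ n) (hm : 1 ≤ m) (q : ℤ → ℝ)
    (hq : ∀ l ∈ Finset.Icc (-(m : ℤ)) (m : ℤ), 0 ≤ q l)
    (hqs : ∑ l ∈ Finset.Icc (-(m : ℤ)) (m : ℤ), q l = 1)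
    (w : ℕ → ℝ)
    (hw : ∀ i : ℕ, 1 ≤ i → i ≤ m → q (i : ℤ) ≤ w i / n) :
    ∑ l ∈ Finset.Icc (-(m : ℤ)) (m : ℤ), q l * Real.exp ((l : ℝ) / m)
      ≤ 1 + (Real.exp 1 - 1) * (∑ i ∈ Finset.Icc 1 m, w i) / n := by
  have hmR : (0 : ℝ) < m := by exact_mod_cast hm
  have hnR : (0 : ℝ) < n := by exact_mod_cast hn
  have step1 : ∑ l ∈ Finset.Icc (-(m : ℤ)) (m : ℤ), q l * (Real.exp ((l : ℝ) / m) - 1)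
      = (∑ l ∈ Finset.Icc (-(m : ℤ)) (m : ℤ), q l * Real.exp ((l : ℝ) / m)) - 1 := by
    calc ∑ l ∈ Finset.Icc (-(m : ℤ)) (m : ℤ), q l * (Real.exp ((l : ℝ) / m) - 1)
        = ∑ l ∈ Finset.Icc (-(m : ℤ)) (m : ℤ),
            (q l * Real.exp ((l : ℝ) / m) - q l) :=
          Finset.sum_congr rfl fun l _ => by ring
      _ = (∑ l ∈ Finset.Icc (-(m : ℤ)) (m : ℤ), q l * Real.exp ((l : ℝ) / m))
            - ∑ l ∈ Finset.Icc (-(m : ℤ)) (m : ℤ), q l := Finset.sum_sub_distrib _ _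
      _ = _ := by rw [hqs]
  have step2 : ∑ l ∈ Finset.Icc (-(m : ℤ)) (m : ℤ), q l * (Real.exp ((l : ℝ) / m) - 1)
      ≤ ∑ l ∈ Finset.Icc (-(m : ℤ)) (m : ℤ),
          (if 1 ≤ l then (w l.toNat / n) * (Real.exp 1 - 1) else 0) := by
    apply Finset.sum_le_sum
    intro l hl
    rcases le_or_gt 1 l with h1 | h1
    · rw [if_pos h1]
      rw [Finset.mem_Icc] at hl
      have hql : 0 ≤ q l := hq l (Finset.mem_Icc.2 hl)
      have hcast : ((l.toNat : ℤ)) = l := Int.toNat_of_nonneg (by omega)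
      have hqw : q l ≤ w l.toNat / n := by
        have := hw l.toNat (by omega) (by omega)
        rwa [hcast] at this
      have he1 : Real.exp ((l : ℝ) / m) - 1 ≤ Real.exp 1 - 1 := by
        have : (l : ℝ) / m ≤ 1 := by
          rw [div_le_one hmR]
          exact_mod_cast hl.2
        linarith [Real.exp_le_exp.2 this]
      have he0 : 0 ≤ Real.exp ((l : ℝ) / m) - 1 := by
        have : (0 : ℝ) ≤ (l : ℝ) / m := by positivity
        linarith [Real.one_le_exp this]
      exact mul_le_mul hqw he1 he0 (le_trans hql hqw)
    · rw [if_neg (by omega)]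
      apply mul_nonpos_of_nonneg_of_nonpos (hq l hl)
      have : (l : ℝ) / m ≤ 0 := by
        apply div_nonpos_of_nonpos_of_nonneg _ (le_of_lt hmR)
        exact_mod_cast (by omega : l ≤ 0)
      linarith [Real.exp_le_one_iff.2 this]
  have step3 : ∑ l ∈ Finset.Icc (-(m : ℤ)) (m : ℤ),
      (if 1 ≤ l then (w l.toNat / n) * (Real.exp 1 - 1) else 0)
      = (Real.exp 1 - 1) * (∑ i ∈ Finset.Icc 1 m, w i) / n := by
    rw [← Finset.sum_filter]
    have hset : (Finset.Icc (-(m : ℤ)) (m : ℤ)).filter (fun l => 1 ≤ l)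
        = Finset.Icc (1 : ℤ) (m : ℤ) := by
      ext l
      simp only [Finset.mem_filter, Finset.mem_Icc]
      omega
    rw [hset]
    rw [show (Real.exp 1 - 1) * (∑ i ∈ Finset.Icc 1 m, w i) / n
        = ∑ i ∈ Finset.Icc 1 m, (w i / n) * (Real.exp 1 - 1) by
      rw [Finset.mul_sum, Finset.sum_div]
      exact Finset.sum_congr rfl fun i _ => by ring]
    apply Finset.sum_nbij' (fun l : ℤ => l.toNat) (fun i : ℕ => (i : ℤ))
    · intro l hl
      rw [Finset.mem_Icc] at hl ⊢
      omega
    · intro i hi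
      rw [Finset.mem_Icc] at hi ⊢
      omega
    · intro l hl
      rw [Finset.mem_Icc] at hl
      omega
    · intro i _
      simp
    · intro l _
      rfl
  rw [step3] at step2
  linarith [step1, step2]

lemma levelAt_neg (N : ℕ) (s : Fin N → ℤ) (t : ℕ) :
    levelAt N (-s) t = -levelAt N s t := by
  rw [levelAt, levelAt, ← Finset.sum_neg_distrib]
  exact Finset.sum_congr rfl fun i _ => rfl

lemma neg_mem_paths {N m : ℕ} {s : Fin N → ℤ} (hs : s ∈ paths N m) : -s ∈ paths N m := by
  rw [mem_paths] at hs ⊢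
  intro i
  have := hs i
  constructor <;> simp <;> omega

lemma down_eq (N m : ℕ) (q : ℤ → ℝ) (B : ℤ) :
    ∑ s ∈ (paths N m).filter (fun s => ∃ t ≤ N, levelAt N s t ≤ -B), pathWeight N q s
    = ∑ s ∈ (paths N m).filter (fun s => ∃ t ≤ N, B ≤ levelAt N s t),
        pathWeight N (fun l => q (-l)) s := by
  apply Finset.sum_nbij' (fun s => -s) (fun s => -s)
  · intro s hs
    rw [Finset.mem_filter] at hs ⊢
    obtain ⟨hs1, t, ht, hlev⟩ := hs
    refine ⟨neg_mem_paths hs1, t, ht, ?_⟩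
    rw [levelAt_neg]
    omega
  · intro s hs
    rw [Finset.mem_filter] at hs ⊢
    obtain ⟨hs1, t, ht, hlev⟩ := hs
    refine ⟨neg_mem_paths hs1, t, ht, ?_⟩
    rw [levelAt_neg]
    omega
  · intro s _; simp
  · intro s _; simp
  · intro s _
    simp [pathWeight]

lemma sum_Icc_neg_index (m : ℕ) (q : ℤ → ℝ) :
    ∑ l ∈ Finset.Icc (-(m : ℤ)) (m : ℤ), q (-l)
      = ∑ l ∈ Finset.Icc (-(m : ℤ)) (m : ℤ), q l := by
  apply Finset.sum_nbij' (fun l : ℤ => -l) (fun l : ℤ => -l)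
  · intro l hl; rw [Finset.mem_Icc] at hl ⊢; omega
  · intro l hl; rw [Finset.mem_Icc] at hl ⊢; omega
  · intro l _; ring
  · intro l _; ring
  · intro l _; rfl

lemma levelAt_full (n : ℕ) (s : Fin n → ℤ) : levelAt n s n = ∑ i, s i := by
  rw [levelAt]
  apply Finset.sum_congr _ (fun _ _ => rfl)
  ext i
  simp [i.isLt]

lemma levelAt_bounds {n m : ℕ} {s : Fin n → ℤ} (hs : s ∈ paths n m) :
    levelAt n s n ∈ Finset.Icc (-((m : ℤ) * n)) ((m : ℤ) * n) := by
  rw [Finset.mem_Icc, levelAt_full]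
  constructor
  · have h1 : ∑ i : Fin n, (-(m : ℤ)) ≤ ∑ i, s i :=
      Finset.sum_le_sum fun i _ => (mem_paths.1 hs i).1
    rw [Finset.sum_const] at h1
    simpa [mul_comm] using h1
  · have h1 : ∑ i, s i ≤ ∑ i : Fin n, (m : ℤ) :=
      Finset.sum_le_sum fun i _ => (mem_paths.1 hs i).2
    rw [Finset.sum_const] at h1
    simpa [mul_comm] using h1

lemma sum_fiber {n : ℕ} (S : Finset (Fin n → ℤ)) (I : Finset ℤ)
    (hmap : ∀ s ∈ S, levelAt n s n ∈ I) (Φ : ℤ → ℝ) (wt : (Fin n → ℤ) → ℝ) :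
    ∑ k ∈ I, Φ k * ∑ s ∈ S.filter (fun s => levelAt n s n = k), wt s
      = ∑ s ∈ S, Φ (levelAt n s n) * wt s := by
  rw [← Finset.sum_fiberwise_of_maps_to hmap (fun s => Φ (levelAt n s n) * wt s)]
  apply Finset.sum_congr rfl
  intro k _
  rw [Finset.mul_sum]
  apply Finset.sum_congr rfl
  intro s hs
  rw [(Finset.mem_filter.1 hs).2]

lemma qcut_eq (n m : ℕ) (q : ℤ → ℝ) (kbar lbar : ℕ) (k : ℤ) :
    qcut n m q kbar lbar k
      = ∑ s ∈ ((paths n m).filter (fun s => ∀ t ≤ n,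
            -(lbar : ℤ) ≤ levelAt n s t ∧ levelAt n s t ≤ (kbar : ℤ))).filter
          (fun s => levelAt n s n = k), pathWeight n q s := by
  rw [qcut, Finset.filter_filter]
  apply Finset.sum_congr _ (fun _ _ => rfl)
  ext s
  simp only [Finset.mem_filter]
  tauto

lemma binomP_nonneg {n : ℕ} {p : ℝ} (hp0 : 0 ≤ p) (hp1 : p ≤ 1) (j : ℕ) :
    0 ≤ binomP n p j := by
  apply mul_nonneg (mul_nonneg (by positivity) (pow_nonneg hp0 _))
  exact pow_nonneg (by linarith) _

lemma binomP_sum (n : ℕ) (p : ℝ) : ∑ j ∈ Finset.range (n + 1), binomP n p j = 1 := by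
  have h := add_pow p (1 - p) n
  have h2 : ∑ j ∈ Finset.range (n + 1), binomP n p j
      = ∑ j ∈ Finset.range (n + 1), p ^ j * (1 - p) ^ (n - j) * (n.choose j : ℝ) :=
    Finset.sum_congr rfl fun j _ => by rw [binomP]; ring
  rw [h2, ← h]
  norm_num

lemma putPayoff_le {n : ℕ} {S0 K σ dt h : ℝ} (hS0 : 0 < S0) (hK : 0 < K) (j : ℕ) (k : ℤ) :
    putPayoff n S0 K σ dt h j k ≤ K := by
  apply max_le _ hK.le
  have := Real.exp_pos ((2 * (j : ℝ) - (n : ℝ)) * (σ * Real.sqrt dt) + h * (k : ℝ))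
  nlinarith

lemma stepA (n m : ℕ) (q : ℤ → ℝ)
    (hq : ∀ l ∈ Finset.Icc (-(m : ℤ)) (m : ℤ), 0 ≤ q l)
    (S0 K σ τ h r p : ℝ) (hS0 : 0 < S0) (hK : 0 < K) (hp0 : 0 ≤ p) (hp1 : p ≤ 1)
    (kbar : ℕ) :
    Vput n m q p S0 K σ τ h r - VTT n m q p S0 K σ τ h r kbar kbar
      ≤ Real.exp (-(r * τ)) * K *
        ∑ s ∈ (paths n m).filter (fun s =>
            ¬ ∀ t ≤ n, -(kbar : ℤ) ≤ levelAt n s t ∧ levelAt n s t ≤ (kbar : ℤ)),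
          pathWeight n q s := by
  set Φ : ℤ → ℝ := fun k => ∑ j ∈ Finset.range (n + 1),
    putPayoff n S0 K σ (τ / n) h j k * binomP n p j with hΦdef
  have hΦK : ∀ k, Φ k ≤ K := by
    intro k
    calc Φ k ≤ ∑ j ∈ Finset.range (n + 1), K * binomP n p j := by
          apply Finset.sum_le_sum
          intro j _
          exact mul_le_mul_of_nonneg_right (putPayoff_le hS0 hK j k) (binomP_nonneg hp0 hp1 j)
      _ = K := by rw [← Finset.mul_sum, binomP_sum, mul_one]
  have hΦ0 : ∀ k, 0 ≤ Φ k := by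
    intro k
    apply Finset.sum_nonneg
    intro j _
    exact mul_nonneg (le_max_right _ _) (binomP_nonneg hp0 hp1 j)
  set band : (Fin n → ℤ) → Prop := fun s => ∀ t ≤ n,
    -(kbar : ℤ) ≤ levelAt n s t ∧ levelAt n s t ≤ (kbar : ℤ) with hbanddef
  have hVput : Vput n m q p S0 K σ τ h r
      = Real.exp (-(r * τ)) * ∑ s ∈ paths n m, Φ (levelAt n s n) * pathWeight n q s := by
    rw [Vput]
    congr 1
    rw [← sum_fiber (paths n m) _ (fun s hs => levelAt_bounds hs) Φ (pathWeight n q)]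
    apply Finset.sum_congr rfl
    intro k _
    rw [← Finset.sum_mul]
    rfl
  have hVTT : VTT n m q p S0 K σ τ h r kbar kbar
      = Real.exp (-(r * τ)) *
          ∑ s ∈ (paths n m).filter band, Φ (levelAt n s n) * pathWeight n q s := by
    rw [VTT]
    congr 1
    rw [← sum_fiber ((paths n m).filter band) (Finset.Icc (-(kbar : ℤ)) (kbar : ℤ))
        (fun s hs => by
          rw [Finset.mem_Icc]
          exact (Finset.mem_filter.1 hs).2 n le_rfl)
        Φ (pathWeight n q)]
    apply Finset.sum_congr rfl
    intro k _
    rw [← Finset.sum_mul, qcut_eq]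
  rw [hVput, hVTT, ← mul_sub]
  have hsplit : (∑ s ∈ paths n m, Φ (levelAt n s n) * pathWeight n q s)
      - ∑ s ∈ (paths n m).filter band, Φ (levelAt n s n) * pathWeight n q s
      = ∑ s ∈ (paths n m).filter (fun s => ¬ band s),
          Φ (levelAt n s n) * pathWeight n q s := by
    rw [← Finset.sum_filter_add_sum_filter_not (paths n m) band
      (fun s => Φ (levelAt n s n) * pathWeight n q s)]
    ring
  rw [hsplit, mul_assoc]
  apply mul_le_mul_of_nonneg_left _ (Real.exp_nonneg _)
  rw [Finset.mul_sum]
  apply Finset.sum_le_sum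
  intro s hs
  exact mul_le_mul_of_nonneg_right (hΦK _)
    (pathWeight_nonneg hq (Finset.mem_of_mem_filter s hs))

lemma Wseq_succ_eq (wf : ℕ → ℝ) (i : ℕ) (hi : 1 ≤ i) :
    Wseq wf (i + 1) = wf (i + 1) + Wseq wf i ^ (((i : ℝ) + 1) / (i : ℝ)) := by
  obtain ⟨k, rfl⟩ : ∃ k, i = k + 1 := ⟨i - 1, by omega⟩
  show Wseq wf (k + 2) = _
  rw [Wseq]
  congr 2
  push_cast
  ring

lemma Wseq_pos (wf : ℕ → ℝ) (m : ℕ) (hw1 : 0 < wf 1)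
    (hwnn : ∀ i, 2 ≤ i → i ≤ m → 0 ≤ wf i) :
    ∀ i, 1 ≤ i → i ≤ m → 0 < Wseq wf i := by
  intro i hi
  induction i, hi using Nat.le_induction with
  | base => intro _; simpa [Wseq] using hw1
  | succ i hi ih =>
      intro him
      rw [Wseq_succ_eq wf i hi]
      have h1 : 0 < Wseq wf i := ih (by omega)
      have h2 : 0 ≤ wf (i + 1) := hwnn (i + 1) (by omega) him
      have h3 : (0 : ℝ) < Wseq wf i ^ (((i : ℝ) + 1) / (i : ℝ)) :=
        Real.rpow_pos_of_pos h1 _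
      linarith

lemma Wseq_telescope (wf : ℕ → ℝ) :
    ∀ M, 1 ≤ M → ∑ i ∈ Finset.Icc 1 M, wf i
      = Wseq wf M + ∑ i ∈ Finset.Icc 1 (M - 1),
          (Wseq wf i - Wseq wf i ^ (((i : ℝ) + 1) / (i : ℝ))) := by
  intro M hM
  induction M, hM using Nat.le_induction with
  | base => simp [Wseq]
  | succ M hM ih =>
      rw [Finset.sum_Icc_succ_top (by omega : 1 ≤ M + 1), ih]
      have hM1 : (M + 1) - 1 = M := by omega
      rw [hM1]
      obtain ⟨k, rfl⟩ : ∃ k, M = k + 1 := ⟨M - 1, by omega⟩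
      simp only [Nat.add_sub_cancel]
      rw [Finset.sum_Icc_succ_top (by omega : 1 ≤ k + 1)]
      rw [Wseq_succ_eq wf (k + 1) (by omega)]
      ring

lemma one_le_Mseq (wf : ℕ → ℝ) (i : ℕ) (hi : 1 ≤ i) (hW : 0 < Wseq wf i) :
    1 ≤ Mseq wf i := by
  rcases le_or_gt 1 (Wseq wf i) with h | h
  · exact le_trans h (le_max_left _ _)
  · refine le_trans ?_ (le_max_right _ _)
    apply Real.one_le_rpow_of_pos_of_le_one_of_nonpos hW h.le
    have hiR : (1 : ℝ) ≤ (i : ℝ) := by exact_mod_cast hi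
    apply div_nonpos_of_nonpos_of_nonneg <;> linarith

lemma exp_one_lt_three : Real.exp 1 < 3 := by
  have := Real.exp_one_lt_d9
  linarith

lemma perterm_bound (wf : ℕ → ℝ) (i : ℕ) (hi : 1 ≤ i) (hW : 0 < Wseq wf i) :
    (Real.exp 1 - 1) * (Wseq wf i - Wseq wf i ^ (((i : ℝ) + 1) / (i : ℝ)))
      ≤ 2 * Real.log (Mseq wf i) + (if i = 1 then (1 : ℝ) / 2 else 0) := by
  have hE1 : (1 : ℝ) ≤ Real.exp 1 := by linarith [Real.one_le_exp (by norm_num : (0:ℝ) ≤ 1)]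
  have hE3 : Real.exp 1 < 3 := _root_.exp_one_lt_three
  have hlogM : 0 ≤ Real.log (Mseq wf i) := Real.log_nonneg (one_le_Mseq wf i hi hW)
  have hite : (0 : ℝ) ≤ (if i = 1 then (1 : ℝ) / 2 else 0) := by positivity
  have hiR : (1 : ℝ) ≤ (i : ℝ) := by exact_mod_cast hi
  set W := Wseq wf i with hWdef
  rcases le_or_gt 1 W with h1 | h1
  · -- W ≥ 1 : the term is nonpositive
    have hexp : (1 : ℝ) ≤ ((i : ℝ) + 1) / (i : ℝ) := by
      rw [le_div_iff₀ (by linarith)]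
      linarith
    have h2 : W ≤ W ^ (((i : ℝ) + 1) / (i : ℝ)) := by
      nth_rewrite 1 [← Real.rpow_one W]
      exact Real.rpow_le_rpow_of_exponent_le h1 hexp
    have h3 : (Real.exp 1 - 1) * (W - W ^ (((i : ℝ) + 1) / (i : ℝ))) ≤ 0 :=
      mul_nonpos_of_nonneg_of_nonpos (by linarith) (by linarith)
    linarith
  · -- W < 1
    rcases eq_or_lt_of_le hi with hi1 | hi2
    · -- i = 1
      have hi1' : i = 1 := hi1.symm
      subst hi1'
      rw [if_pos rfl]
      have hexp2 : ((1 : ℕ) : ℝ) + 1 = 2 := by norm_num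
      have h2 : W ^ ((((1 : ℕ) : ℝ) + 1) / ((1 : ℕ) : ℝ)) = W ^ (2 : ℕ) := by
        rw [show ((((1 : ℕ) : ℝ) + 1) / ((1 : ℕ) : ℝ)) = ((2 : ℕ) : ℝ) by norm_num]
        exact Real.rpow_natCast W 2
      rw [h2]
      nlinarith [sq_nonneg (W - 1/2), sq_nonneg W]
    · -- 2 ≤ i
      have hi2' : (2 : ℝ) ≤ (i : ℝ) := by exact_mod_cast hi2
      have hine : (i : ℝ) ≠ 0 := by linarith
      rw [if_neg (by omega)]
      set u := W ^ ((1 : ℝ) / (i : ℝ)) with hudef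
      have hu0 : 0 < u := Real.rpow_pos_of_pos hW _
      have hu1 : u ≤ 1 := Real.rpow_le_one hW.le h1.le (by positivity)
      have hWu : W ^ (((i : ℝ) + 1) / (i : ℝ)) = W * u := by
        have hexpeq : ((i : ℝ) + 1) / (i : ℝ) = 1 + 1 / (i : ℝ) := by field_simp
        rw [hexpeq, Real.rpow_one_add' hW.le
          (by positivity : (0:ℝ) < 1 + 1 / (i : ℝ)).ne']
      have hlogu : Real.log u ≤ u - 1 := by
        have := Real.log_le_sub_one_of_pos hu0
        linarith
      have hlogWu : Real.log W = (i : ℝ) * Real.log u := by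
        rw [hudef, Real.log_rpow hW]
        field_simp
      have hMge : ((1 : ℝ) - (i : ℝ)) / (i : ℝ) * Real.log W ≤ Real.log (Mseq wf i) := by
        have h4 : W ^ (((1 : ℝ) - (i : ℝ)) / (i : ℝ)) ≤ Mseq wf i := le_max_right _ _
        have h5 : Real.log (W ^ (((1 : ℝ) - (i : ℝ)) / (i : ℝ))) ≤ Real.log (Mseq wf i) :=
          Real.log_le_log (Real.rpow_pos_of_pos hW _) h4
        rwa [Real.log_rpow hW] at h5
      -- chain of inequalities
      have hkey : (Real.exp 1 - 1) * (W - W * u) ≤ 2 * ((1 - (i : ℝ)) / (i : ℝ)) * Real.log W := by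
        have e1 : 2 * ((1 - (i : ℝ)) / (i : ℝ)) * Real.log W = 2 * (1 - (i : ℝ)) * Real.log u := by
          rw [hlogWu]
          field_simp
        rw [e1]
        have e2 : 2 * (1 - (i : ℝ)) * Real.log u ≥ 2 * ((i : ℝ) - 1) * (1 - u) := by
          nlinarith [mul_nonneg (by linarith : (0:ℝ) ≤ (i : ℝ) - 1)
            (by linarith : (0:ℝ) ≤ (u - 1) - Real.log u)]
        have e3 : (Real.exp 1 - 1) * (W - W * u) ≤ 2 * (1 - u) := by
          nlinarith [mul_nonneg (by linarith : (0:ℝ) ≤ 1 - u) (by nlinarith : (0:ℝ) ≤ 2 - (Real.exp 1 - 1) * W)]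
        nlinarith [mul_nonneg (by linarith : (0:ℝ) ≤ (i : ℝ) - 2) (by linarith : (0:ℝ) ≤ 1 - u)]
      rw [hWu]
      calc (Real.exp 1 - 1) * (W - W * u)
          ≤ 2 * ((1 - (i : ℝ)) / (i : ℝ)) * Real.log W := hkey
        _ ≤ 2 * Real.log (Mseq wf i) := by linarith [hMge]
        _ ≤ 2 * Real.log (Mseq wf i) + 0 := by linarith

lemma sw_bound (wf : ℕ → ℝ) (m : ℕ) (hm : 1 ≤ m) (hw1 : 0 < wf 1)
    (hwnn : ∀ i, 2 ≤ i → i ≤ m → 0 ≤ wf i) :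
    (Real.exp 1 - 1) * (∑ i ∈ Finset.Icc 1 m, wf i)
      ≤ (Real.exp 1 - 1) * Wseq wf m
        + 2 * (∑ i ∈ Finset.Icc 1 (m - 1), Real.log (Mseq wf i)) + 1 / 2 := by
  rw [Wseq_telescope wf m hm, mul_add, Finset.mul_sum]
  have hsum : ∑ i ∈ Finset.Icc 1 (m - 1),
      (Real.exp 1 - 1) * (Wseq wf i - Wseq wf i ^ (((i : ℝ) + 1) / (i : ℝ)))
      ≤ ∑ i ∈ Finset.Icc 1 (m - 1),
        (2 * Real.log (Mseq wf i) + (if i = 1 then (1 : ℝ) / 2 else 0)) := by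
    apply Finset.sum_le_sum
    intro i hi
    rw [Finset.mem_Icc] at hi
    exact perterm_bound wf i hi.1 (Wseq_pos wf m hw1 hwnn i hi.1 (by omega))
  rw [Finset.sum_add_distrib] at hsum
  have hite : ∑ i ∈ Finset.Icc 1 (m - 1), (if i = 1 then (1 : ℝ) / 2 else 0) ≤ 1 / 2 := by
    rw [Finset.sum_ite_eq' (Finset.Icc 1 (m - 1)) 1 (fun _ => (1 : ℝ) / 2)]
    split_ifs <;> norm_num
  have hlog : ∑ i ∈ Finset.Icc 1 (m - 1), 2 * Real.log (Mseq wf i)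
      = 2 * ∑ i ∈ Finset.Icc 1 (m - 1), Real.log (Mseq wf i) := by
    rw [Finset.mul_sum]
  linarith

lemma exp_half_lt_two : Real.exp ((1 : ℝ) / 2) < 2 := by
  have hsq : Real.exp ((1 : ℝ) / 2) * Real.exp ((1 : ℝ) / 2) = Real.exp 1 := by
    rw [← Real.exp_add]; norm_num
  nlinarith [Real.exp_one_lt_d9, Real.exp_pos ((1 : ℝ) / 2),
    sq_nonneg (Real.exp ((1 : ℝ) / 2) - 2)]

lemma core2_bound (a b c : ℝ) (ha : 1 ≤ a) (hb : 1 ≤ b) (hc : 1 ≤ c) :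
    2 * Real.exp ((1 : ℝ) / 2) < 8 * a * a * (a + 1) * b * (c * c) := by
  have e1 : (16 : ℝ) ≤ 8 * a * a * (a + 1) := by
    nlinarith [mul_nonneg (by linarith : (0 : ℝ) ≤ a - 1)
      (by nlinarith : (0 : ℝ) ≤ a * a + 2 * a + 2)]
  have e2 : 8 * a * a * (a + 1) ≤ 8 * a * a * (a + 1) * b :=
    le_mul_of_one_le_right (by nlinarith) hb
  have e3 : 8 * a * a * (a + 1) * b ≤ 8 * a * a * (a + 1) * b * (c * c) :=
    le_mul_of_one_le_right (by nlinarith) (by nlinarith)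
  nlinarith [exp_half_lt_two]

end Aux

/-- Theorem (European put, general m): if `k̄ = l̄` satisfies
`k̄ ≥ max{ m⌈2W_m − 1⌉ − 1, m⌈W_m e − ln ε − rτ + ln(4m(m+1)KG)⌉ − 1 }`,
then `V − V^{TT} < ε`. -/
theorem put_truncation_error_general (n m : ℕ) (hn : 1 ≤ n) (hm : 1 ≤ m) (q : ℤ → ℝ)
    (hq : ∀ l : ℤ, -(m : ℤ) ≤ l → l ≤ (m : ℤ) → 0 ≤ q l)
    (hsum : ∑ l ∈ Finset.Icc (-(m : ℤ)) (m : ℤ), q l = 1)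
    (hq1 : 0 < max (q 1) (q (-1)))
    (wf : ℕ → ℝ) (hwf : ∀ i : ℕ, wf i = (n : ℝ) * max (q (i : ℤ)) (q (-(i : ℤ))))
    (S0 K σ τ h r p : ℝ) (hS0 : 0 < S0) (hK : 0 < K) (hh : 0 < h) (hτ : 0 < τ)
    (hp0 : 0 ≤ p) (hp1 : p ≤ 1)
    (ε : ℝ) (hε : 0 < ε) (kbar : ℕ)
    (hkbar : max ((m : ℝ) * (⌈2 * Wseq wf m - 1⌉ : ℤ) - 1)
        ((m : ℝ) * (⌈Wseq wf m * Real.exp 1 - Real.log ε - r * τ +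
            Real.log (4 * m * ((m : ℝ) + 1) * K * Gconst wf m)⌉ : ℤ) - 1) ≤ (kbar : ℝ)) :
    Vput n m q p S0 K σ τ h r - VTT n m q p S0 K σ τ h r kbar kbar < ε := by
  have hnR : (0 : ℝ) < n := by exact_mod_cast hn
  have hmR : (0 : ℝ) < m := by exact_mod_cast hm
  have hm1R : (1 : ℝ) ≤ (m : ℝ) := by exact_mod_cast hm
  have hE1 : (1 : ℝ) ≤ Real.exp 1 := Real.one_le_exp (by norm_num)
  have hq' : ∀ l ∈ Finset.Icc (-(m : ℤ)) (m : ℤ), 0 ≤ q l := fun l hl =>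
    hq l (Finset.mem_Icc.1 hl).1 (Finset.mem_Icc.1 hl).2
  have hw1 : 0 < wf 1 := by
    rw [hwf 1]
    apply mul_pos hnR
    simpa using hq1
  have hwnn : ∀ i, 1 ≤ i → i ≤ m → 0 ≤ wf i := by
    intro i h1 h2
    rw [hwf i]
    apply mul_nonneg hnR.le
    apply le_trans _ (le_max_left _ _)
    apply hq
    · have : (i : ℤ) ≤ (m : ℤ) := by exact_mod_cast h2
      omega
    · exact_mod_cast h2
  have hwnn2 : ∀ i, 2 ≤ i → i ≤ m → 0 ≤ wf i := fun i h1 h2 => hwnn i (by omega) h2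
  have hWpos : 0 < Wseq wf m := Wseq_pos wf m hw1 hwnn2 m hm le_rfl
  have hsw0 : 0 ≤ ∑ i ∈ Finset.Icc 1 m, wf i :=
    Finset.sum_nonneg fun i hi =>
      hwnn i (Finset.mem_Icc.1 hi).1 (Finset.mem_Icc.1 hi).2
  set sw : ℝ := ∑ i ∈ Finset.Icc 1 m, wf i with hswdef
  set C : ℝ := 1 + (Real.exp 1 - 1) * sw / n with hCdef
  have hC1 : 1 ≤ C := by
    have h0 : 0 ≤ (Real.exp 1 - 1) * sw / n :=
      div_nonneg (mul_nonneg (by linarith) hsw0) hnR.le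
    rw [hCdef]
    linarith
  have hCexp : C ^ n ≤ Real.exp ((Real.exp 1 - 1) * sw) := by
    have h1 : C ≤ Real.exp ((Real.exp 1 - 1) * sw / n) := by
      have := Real.add_one_le_exp ((Real.exp 1 - 1) * sw / n)
      rw [hCdef]
      linarith
    calc C ^ n ≤ (Real.exp ((Real.exp 1 - 1) * sw / n)) ^ n :=
          pow_le_pow_left₀ (by linarith) h1 n
      _ = Real.exp ((n : ℝ) * ((Real.exp 1 - 1) * sw / n)) := (Real.exp_nat_mul _ n).symm
      _ = Real.exp ((Real.exp 1 - 1) * sw) := by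
          congr 1
          field_simp
  -- tilt bounds
  have hwq : ∀ i : ℕ, 1 ≤ i → i ≤ m → q (i : ℤ) ≤ wf i / n := by
    intro i h1 h2
    rw [hwf i, mul_comm, mul_div_assoc, div_self hnR.ne', mul_one]
    exact le_max_left _ _
  have hwq' : ∀ i : ℕ, 1 ≤ i → i ≤ m → q (-(i : ℤ)) ≤ wf i / n := by
    intro i h1 h2
    rw [hwf i, mul_comm, mul_div_assoc, div_self hnR.ne', mul_one]
    exact le_max_right _ _
  have hcq : ∑ l ∈ Finset.Icc (-(m : ℤ)) (m : ℤ), q l * Real.exp ((l : ℝ) / m) ≤ C := by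
    have := tilt_bound n m hn hm q hq' hsum wf hwq
    rw [hCdef]
    linarith
  have hq2 : ∀ l ∈ Finset.Icc (-(m : ℤ)) (m : ℤ), 0 ≤ (fun l => q (-l)) l := by
    intro l hl
    apply hq'
    rw [Finset.mem_Icc] at hl ⊢
    omega
  have hsum2 : ∑ l ∈ Finset.Icc (-(m : ℤ)) (m : ℤ), (fun l => q (-l)) l = 1 := by
    rw [sum_Icc_neg_index m q]
    exact hsum
  have hcq2 : ∑ l ∈ Finset.Icc (-(m : ℤ)) (m : ℤ),
      (fun l => q (-l)) l * Real.exp ((l : ℝ) / m) ≤ C := by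
    have := tilt_bound n m hn hm (fun l => q (-l)) hq2 hsum2 wf
      (fun i h1 h2 => hwq' i h1 h2)
    rw [hCdef]
    linarith
  -- tail bounds
  have hup := chernoff m q hq' hsum C hC1 hcq n ((kbar : ℤ) + 1)
  have hdown0 := chernoff m (fun l => q (-l)) hq2 hsum2 C hC1 hcq2 n ((kbar : ℤ) + 1)
  have hdown : ∑ s ∈ (paths n m).filter
      (fun s => ∃ t ≤ n, levelAt n s t ≤ -((kbar : ℤ) + 1)), pathWeight n q s
      ≤ Real.exp (-(((kbar : ℤ) + 1 : ℤ) : ℝ) / m) * C ^ n := by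
    rw [down_eq n m q ((kbar : ℤ) + 1)]
    exact hdown0
  -- bad set split
  have hsubset : (paths n m).filter (fun s =>
      ¬ ∀ t ≤ n, -(kbar : ℤ) ≤ levelAt n s t ∧ levelAt n s t ≤ (kbar : ℤ)) ⊆ (paths n m).filter (fun s =>
      (∃ t ≤ n, (kbar : ℤ) + 1 ≤ levelAt n s t) ∨
      (∃ t ≤ n, levelAt n s t ≤ -((kbar : ℤ) + 1))) := by
    apply Finset.monotone_filter_right
    intro s _ hP
    rcases not_forall.1 hP with ⟨t, hT⟩
    rcases Classical.not_imp.1 hT with ⟨ht, hv⟩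
    have hd : (kbar : ℤ) + 1 ≤ levelAt n s t ∨ levelAt n s t ≤ -((kbar : ℤ) + 1) := by
      omega
    rcases hd with hd | hd
    · exact Or.inl ⟨t, ht, hd⟩
    · exact Or.inr ⟨t, ht, hd⟩
  have hDsplit : ∑ s ∈ (paths n m).filter (fun s =>
      ¬ ∀ t ≤ n, -(kbar : ℤ) ≤ levelAt n s t ∧ levelAt n s t ≤ (kbar : ℤ)), pathWeight n q s
      ≤ 2 * (Real.exp (-(((kbar : ℤ) + 1 : ℤ) : ℝ) / m) * C ^ n) := by
    have h1 : ∑ s ∈ (paths n m).filter (fun s =>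
        ¬ ∀ t ≤ n, -(kbar : ℤ) ≤ levelAt n s t ∧ levelAt n s t ≤ (kbar : ℤ)), pathWeight n q s
        ≤ ∑ s ∈ (paths n m).filter (fun s =>
            (∃ t ≤ n, (kbar : ℤ) + 1 ≤ levelAt n s t) ∨
            (∃ t ≤ n, levelAt n s t ≤ -((kbar : ℤ) + 1))), pathWeight n q s := by
      apply Finset.sum_le_sum_of_subset_of_nonneg hsubset
      intro s hs _
      exact pathWeight_nonneg hq' (Finset.mem_of_mem_filter s hs)
    have h2 : ∑ s ∈ (paths n m).filter (fun s =>
            (∃ t ≤ n, (kbar : ℤ) + 1 ≤ levelAt n s t) ∨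
            (∃ t ≤ n, levelAt n s t ≤ -((kbar : ℤ) + 1))), pathWeight n q s
        ≤ ∑ s ∈ (paths n m).filter (fun s => ∃ t ≤ n, (kbar : ℤ) + 1 ≤ levelAt n s t),
            pathWeight n q s
          + ∑ s ∈ (paths n m).filter (fun s => ∃ t ≤ n, levelAt n s t ≤ -((kbar : ℤ) + 1)),
            pathWeight n q s := by
      rw [Finset.filter_or]
      have h3 := Finset.sum_union_inter (s₁ := (paths n m).filter
          (fun s => ∃ t ≤ n, (kbar : ℤ) + 1 ≤ levelAt n s t))
        (s₂ := (paths n m).filter (fun s => ∃ t ≤ n, levelAt n s t ≤ -((kbar : ℤ) + 1)))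
        (f := pathWeight n q)
      have h4 : 0 ≤ ∑ s ∈ ((paths n m).filter
          (fun s => ∃ t ≤ n, (kbar : ℤ) + 1 ≤ levelAt n s t)) ∩
          ((paths n m).filter (fun s => ∃ t ≤ n, levelAt n s t ≤ -((kbar : ℤ) + 1))),
          pathWeight n q s := by
        apply Finset.sum_nonneg
        intro s hs
        rw [Finset.mem_inter] at hs
        exact pathWeight_nonneg hq' (Finset.mem_of_mem_filter s hs.1)
      linarith
    linarith
  -- step A
  have hmain := stepA n m q hq' S0 K σ τ h r p hS0 hK hp0 hp1 kbar
  -- constants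
  set W : ℝ := Wseq wf m with hWdef
  set P : ℝ := ∏ i ∈ Finset.Icc 1 (m - 1), (Mseq wf i) ^ 2 with hPdef
  have hM1 : ∀ i ∈ Finset.Icc 1 (m - 1), 1 ≤ Mseq wf i := by
    intro i hi
    rw [Finset.mem_Icc] at hi
    exact one_le_Mseq wf i hi.1 (Wseq_pos wf m hw1 hwnn2 i hi.1 (by omega))
  have hP1 : 1 ≤ P := by
    rw [hPdef]
    calc (1 : ℝ) = ∏ i ∈ Finset.Icc 1 (m - 1), (1 : ℝ) := by rw [Finset.prod_const_one]
      _ ≤ ∏ i ∈ Finset.Icc 1 (m - 1), (Mseq wf i) ^ 2 := by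
          apply Finset.prod_le_prod (fun i _ => by norm_num)
          intro i hi
          exact one_le_pow₀ (hM1 i hi)
  have hexpsum : Real.exp (2 * ∑ i ∈ Finset.Icc 1 (m - 1), Real.log (Mseq wf i)) = P := by
    rw [Finset.mul_sum, Real.exp_sum, hPdef]
    apply Finset.prod_congr rfl
    intro i hi
    rw [show (2 : ℝ) * Real.log (Mseq wf i) = Real.log (Mseq wf i) + Real.log (Mseq wf i)
      by ring, Real.exp_add, Real.exp_log (by linarith [hM1 i hi] : 0 < Mseq wf i)]
    rw [pow_two]
  have hG : Gconst wf m = 2 * m * max W 1 * Real.exp W * P := rfl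
  have hmax1 : (1 : ℝ) ≤ max W 1 := le_max_right _ _
  have hGpos : 0 < Gconst wf m := by
    rw [hG]
    have h1 : (0 : ℝ) < 2 * m := by positivity
    have h2 : (0 : ℝ) < max W 1 := by linarith
    have h3 : (0 : ℝ) < Real.exp W := Real.exp_pos _
    have h4 : (0 : ℝ) < P := by linarith
    exact mul_pos (mul_pos (mul_pos h1 h2) h3) h4
  set D4 : ℝ := 4 * m * ((m : ℝ) + 1) * K * Gconst wf m with hD4def
  have hD4pos : 0 < D4 := by
    rw [hD4def]
    have h4m : (0 : ℝ) < 4 * m := by positivity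
    have hm1 : (0 : ℝ) < (m : ℝ) + 1 := by linarith
    exact mul_pos (mul_pos (mul_pos h4m hm1) hK) hGpos
  set X : ℝ := W * Real.exp 1 - Real.log ε - r * τ + Real.log D4 with hXdef
  have hX : X ≤ ((kbar : ℝ) + 1) / m := by
    have h1 : (m : ℝ) * (⌈X⌉ : ℤ) - 1 ≤ (kbar : ℝ) := le_trans (le_max_right _ _) hkbar
    have h2 : X ≤ (⌈X⌉ : ℤ) := Int.le_ceil X
    rw [le_div_iff₀ hmR]
    have h4 : X * m ≤ (⌈X⌉ : ℤ) * (m : ℝ) := mul_le_mul_of_nonneg_right h2 hmR.le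
    linarith only [h1, h4]
  -- final numeric assembly
  have hswb := sw_bound wf m hm hw1 hwnn2
  rw [← hswdef, ← hWdef] at hswb
  have hEW : (1 : ℝ) ≤ Real.exp W := Real.one_le_exp hWpos.le
  have hcore : 2 * K * Real.exp ((Real.exp 1 - 1) * sw) < Real.exp (W * Real.exp 1) * D4 := by
    have t1 : Real.exp ((Real.exp 1 - 1) * sw)
        ≤ Real.exp ((Real.exp 1 - 1) * W) * P * Real.exp ((1 : ℝ) / 2) := by
      calc Real.exp ((Real.exp 1 - 1) * sw)
          ≤ Real.exp ((Real.exp 1 - 1) * W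
              + 2 * (∑ i ∈ Finset.Icc 1 (m - 1), Real.log (Mseq wf i)) + 1 / 2) := by
            apply Real.exp_le_exp.2
            linarith only [hswb]
        _ = Real.exp ((Real.exp 1 - 1) * W)
              * Real.exp (2 * (∑ i ∈ Finset.Icc 1 (m - 1), Real.log (Mseq wf i)))
              * Real.exp ((1 : ℝ) / 2) := by
            rw [← Real.exp_add, ← Real.exp_add]
        _ = Real.exp ((Real.exp 1 - 1) * W) * P * Real.exp ((1 : ℝ) / 2) := by
            rw [hexpsum]
    have t2 : Real.exp (W * Real.exp 1) = Real.exp ((Real.exp 1 - 1) * W) * Real.exp W := by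
      rw [← Real.exp_add]; congr 1; ring
    have hFpos : 0 < Real.exp ((Real.exp 1 - 1) * W) * P :=
      mul_pos (Real.exp_pos _) (by linarith only [hP1])
    have hcore2 : 2 * Real.exp ((1 : ℝ) / 2)
        < 8 * (m : ℝ) * (m : ℝ) * ((m : ℝ) + 1) * max W 1 * (Real.exp W * Real.exp W) :=
      core2_bound (m : ℝ) (max W 1) (Real.exp W) hm1R hmax1 hEW
    calc 2 * K * Real.exp ((Real.exp 1 - 1) * sw)
        ≤ 2 * K * (Real.exp ((Real.exp 1 - 1) * W) * P * Real.exp ((1 : ℝ) / 2)) := by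
          apply mul_le_mul_of_nonneg_left t1 (by linarith only [hK] : (0 : ℝ) ≤ 2 * K)
      _ = (K * (Real.exp ((Real.exp 1 - 1) * W) * P)) * (2 * Real.exp ((1 : ℝ) / 2)) := by
          ring
      _ < (K * (Real.exp ((Real.exp 1 - 1) * W) * P))
            * (8 * (m : ℝ) * (m : ℝ) * ((m : ℝ) + 1) * max W 1
                * (Real.exp W * Real.exp W)) :=
          mul_lt_mul_of_pos_left hcore2 (mul_pos hK hFpos)
      _ = Real.exp (W * Real.exp 1) * D4 := by
          rw [t2, hD4def, hG]; ring
  have hD2 : ∑ s ∈ (paths n m).filter (fun s =>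
      ¬ ∀ t ≤ n, -(kbar : ℤ) ≤ levelAt n s t ∧ levelAt n s t ≤ (kbar : ℤ)), pathWeight n q s
      ≤ 2 * (Real.exp (-X) * Real.exp ((Real.exp 1 - 1) * sw)) := by
    have s3 : Real.exp (-(((kbar : ℤ) + 1 : ℤ) : ℝ) / m) ≤ Real.exp (-X) := by
      apply Real.exp_le_exp.2
      push_cast
      rw [neg_div]
      linarith only [hX]
    have s4 : Real.exp (-(((kbar : ℤ) + 1 : ℤ) : ℝ) / m) * C ^ n
        ≤ Real.exp (-X) * Real.exp ((Real.exp 1 - 1) * sw) :=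
      mul_le_mul s3 hCexp (pow_nonneg (by linarith only [hC1]) n) (Real.exp_nonneg _)
    linarith only [hDsplit, s4]
  have hexpX : Real.exp (-X) = ε * Real.exp (r * τ) / Real.exp (W * Real.exp 1) / D4 := by
    have hXeq : -X = Real.log ε + r * τ - W * Real.exp 1 - Real.log D4 := by
      rw [hXdef]; ring
    rw [hXeq, Real.exp_sub, Real.exp_sub, Real.exp_add, Real.exp_log hε,
      Real.exp_log hD4pos]
  have hfinal : Real.exp (-(r * τ)) * K *
      (2 * (Real.exp (-X) * Real.exp ((Real.exp 1 - 1) * sw))) < ε := by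
    rw [hexpX, Real.exp_neg]
    have heq : (Real.exp (r * τ))⁻¹ * K *
        (2 * (ε * Real.exp (r * τ) / Real.exp (W * Real.exp 1) / D4
          * Real.exp ((Real.exp 1 - 1) * sw)))
        = ε * (2 * K * Real.exp ((Real.exp 1 - 1) * sw))
            / (Real.exp (W * Real.exp 1) * D4) := by
      field_simp
    rw [heq, div_lt_iff₀ (mul_pos (Real.exp_pos _) hD4pos)]
    calc ε * (2 * K * Real.exp ((Real.exp 1 - 1) * sw))
        < ε * (Real.exp (W * Real.exp 1) * D4) := by
          exact mul_lt_mul_of_pos_left hcore hε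
      _ = ε * (Real.exp (W * Real.exp 1) * D4) := rfl
  calc Vput n m q p S0 K σ τ h r - VTT n m q p S0 K σ τ h r kbar kbar
      ≤ Real.exp (-(r * τ)) * K * ∑ s ∈ (paths n m).filter (fun s =>
          ¬ ∀ t ≤ n, -(kbar : ℤ) ≤ levelAt n s t ∧ levelAt n s t ≤ (kbar : ℤ)),
          pathWeight n q s := hmain
    _ ≤ Real.exp (-(r * τ)) * K *
          (2 * (Real.exp (-X) * Real.exp ((Real.exp 1 - 1) * sw))) := by
        apply mul_le_mul_of_nonneg_left hD2
        exact mul_nonneg (Real.exp_nonneg _) hK.le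
    _ < ε := hfinal
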